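/- Let q ≥ 2, t ≥ 1, R ≥ 1 and s ≥ 0 be integers and let δ be a real number with 0 < δ ≤ 1. Let S₁, …, S_s be pairwise disjoint subsets of [R] with |S_i| ≤ t for each i, and let c₁, …, c_s : [R] → [q] be arbitrary strings. Let I ⊆ [q]^R satisfy |I| ≥ δ · q^R and suppose that for every b ∈ I and every i ∈ [s] there exists r ∈ S_i with b(r) = c_i(r). Then s ≤ (q/(q − 1))^t · ln(1/δ). -/

import Mathlib

open Finset

-- independence of events depending on disjoint coordinate sets
lemma indep_count {q R : ℕ} (U : Finset (Fin R)) (P Q : (Fin R → Fin q) → Prop)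
    [DecidablePred P] [DecidablePred Q]
    (hP : ∀ b b' : Fin R → Fin q, (∀ r ∈ U, b r = b' r) → P b → P b')
    (hQ : ∀ b b' : Fin R → Fin q, (∀ r, r ∉ U → b r = b' r) → Q b → Q b') :
    (Finset.univ.filter fun b => P b ∧ Q b).card * q ^ R
      = (Finset.univ.filter P).card * (Finset.univ.filter Q).card := by
  classical
  have key : ((Finset.univ.filter fun b => P b ∧ Q b) ×ˢ
        (Finset.univ : Finset (Fin R → Fin q))).card
      = ((Finset.univ.filter P) ×ˢ (Finset.univ.filter Q)).card := by
    apply Finset.card_nbij' (fun p => (U.piecewise p.1 p.2, U.piecewise p.2 p.1))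
      (fun p => (U.piecewise p.1 p.2, U.piecewise p.2 p.1))
    · rintro ⟨b, b'⟩ hb
      simp only [Finset.mem_coe, Finset.mem_product, Finset.mem_filter, Finset.mem_univ, true_and] at hb ⊢
      obtain ⟨⟨hPb, hQb⟩, -⟩ := hb
      constructor
      · exact hP b _ (fun r hr => (U.piecewise_eq_of_mem _ _ hr).symm) hPb
      · exact hQ b _ (fun r hr => (U.piecewise_eq_of_notMem _ _ hr).symm) hQb
    · rintro ⟨b, b'⟩ hb
      simp only [Finset.mem_coe, Finset.mem_product, Finset.mem_filter, Finset.mem_univ, true_and, and_true] at hb ⊢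
      obtain ⟨hPb, hQb'⟩ := hb
      constructor
      · exact hP b _ (fun r hr => (U.piecewise_eq_of_mem _ _ hr).symm) hPb
      · exact hQ b' _ (fun r hr => (U.piecewise_eq_of_notMem _ _ hr).symm) hQb'
    · rintro ⟨b, b'⟩ -
      ext r <;> by_cases hr : r ∈ U <;>
        simp [Finset.piecewise_eq_of_mem, Finset.piecewise_eq_of_notMem, hr]
    · rintro ⟨b, b'⟩ -
      ext r <;> by_cases hr : r ∈ U <;>
        simp [Finset.piecewise_eq_of_mem, Finset.piecewise_eq_of_notMem, hr]
  simpa [Finset.card_product, Finset.card_univ, Fintype.card_fun] using key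

lemma block_compl_count {q R : ℕ} (S : Finset (Fin R)) (c : Fin R → Fin q) :
    (Finset.univ.filter fun b : Fin R → Fin q => ∀ r ∈ S, b r ≠ c r).card
      = (q - 1) ^ S.card * q ^ (R - S.card) := by
  classical
  have hset : (Finset.univ.filter fun b : Fin R → Fin q => ∀ r ∈ S, b r ≠ c r)
      = Fintype.piFinset (fun r => if r ∈ S then ({c r}ᶜ : Finset (Fin q)) else Finset.univ) := by
    ext b
    simp only [Finset.mem_filter, Finset.mem_univ, true_and, Fintype.mem_piFinset]
    constructor
    · intro h r
      by_cases hr : r ∈ S <;> simp [hr, h r]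
    · intro h r hr
      have := h r
      simpa [hr] using this
  rw [hset, Fintype.card_piFinset]
  have hcard : ∀ r : Fin R,
      ((if r ∈ S then ({c r}ᶜ : Finset (Fin q)) else Finset.univ)).card
        = if r ∈ S then q - 1 else q := by
    intro r
    by_cases hr : r ∈ S <;> simp [hr, Finset.card_compl, Finset.card_univ]
  simp only [hcard]
  rw [← Finset.prod_sdiff (Finset.subset_univ S)]
  have h1 : ∏ r ∈ Finset.univ \ S, (if r ∈ S then q - 1 else q) = q ^ (R - S.card) := by
    have : ∏ r ∈ Finset.univ \ S, (if r ∈ S then q - 1 else q)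
        = ∏ _r ∈ Finset.univ \ S, q :=
      Finset.prod_congr rfl (fun r hr => by
        simp only [Finset.mem_sdiff] at hr; simp [hr.2])
    rw [this, Finset.prod_const,
      Finset.card_sdiff_of_subset (Finset.subset_univ S), Finset.card_univ, Fintype.card_fin]
  have h2 : ∏ r ∈ S, (if r ∈ S then q - 1 else q) = (q - 1) ^ S.card := by
    have : ∏ r ∈ S, (if r ∈ S then q - 1 else q) = ∏ _r ∈ S, (q - 1) :=
      Finset.prod_congr rfl (fun r hr => by simp [hr])
    rw [this, Finset.prod_const]
  rw [h1, h2, mul_comm]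

lemma block_count_le {q R t : ℕ} (hq : 2 ≤ q) (S : Finset (Fin R)) (hS : S.card ≤ t)
    (c : Fin R → Fin q) :
    ((Finset.univ.filter fun b : Fin R → Fin q => ∃ r ∈ S, b r = c r).card : ℝ)
      ≤ (1 - (((q : ℝ) - 1) / q) ^ t) * (q : ℝ) ^ R := by
  classical
  have hq0 : (0 : ℝ) < q := by positivity
  have hq1 : (1 : ℝ) ≤ (q : ℝ) - 1 := by
    have : (2 : ℝ) ≤ q := by exact_mod_cast hq
    linarith
  have hsplit := Finset.card_filter_add_card_filter_not
    (s := (Finset.univ : Finset (Fin R → Fin q)))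
    (p := fun b : Fin R → Fin q => ∃ r ∈ S, b r = c r)
  have hcompl : (Finset.univ.filter fun b : Fin R → Fin q => ¬ ∃ r ∈ S, b r = c r)
      = (Finset.univ.filter fun b : Fin R → Fin q => ∀ r ∈ S, b r ≠ c r) := by
    apply Finset.filter_congr
    intro b _
    push_neg
    rfl
  have htotal : (Finset.univ : Finset (Fin R → Fin q)).card = q ^ R := by
    rw [Finset.card_univ, Fintype.card_fun, Fintype.card_fin, Fintype.card_fin]
  have hSR : S.card ≤ R := by
    simpa [Fintype.card_fin] using Finset.card_le_univ S
  have hkey : ((Finset.univ.filter fun b : Fin R → Fin q => ∃ r ∈ S, b r = c r).card : ℝ)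
      = (q : ℝ) ^ R - ((q - 1 : ℕ) : ℝ) ^ S.card * (q : ℝ) ^ (R - S.card) := by
    have := hsplit
    rw [hcompl, block_compl_count, htotal] at this
    have hle : (q - 1) ^ S.card * q ^ (R - S.card) ≤ q ^ R := by
      calc (q - 1) ^ S.card * q ^ (R - S.card) ≤ q ^ S.card * q ^ (R - S.card) := by
            apply Nat.mul_le_mul_right
            exact Nat.pow_le_pow_left (Nat.sub_le q 1) _
        _ = q ^ R := by rw [← pow_add, Nat.add_sub_cancel' hSR]
    have : (Finset.univ.filter fun b : Fin R → Fin q => ∃ r ∈ S, b r = c r).card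
        = q ^ R - (q - 1) ^ S.card * q ^ (R - S.card) := Nat.eq_sub_of_add_eq this
    rw [this, Nat.cast_sub hle]
    push_cast
    ring
  rw [hkey]
  have hcast : ((q - 1 : ℕ) : ℝ) = (q : ℝ) - 1 := by
    have : 1 ≤ q := le_trans (by norm_num) hq
    push_cast [Nat.cast_sub this]
    ring
  rw [hcast]
  have hrewrite : ((q : ℝ) - 1) ^ S.card * (q : ℝ) ^ (R - S.card)
      = (((q : ℝ) - 1) / q) ^ S.card * (q : ℝ) ^ R := by
    rw [div_pow, div_mul_eq_mul_div, eq_div_iff (pow_ne_zero _ hq0.ne'), mul_assoc,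
      ← pow_add, Nat.sub_add_cancel hSR]
  rw [hrewrite]
  have hp1 : (((q : ℝ) - 1) / q) ≤ 1 := by
    rw [div_le_one hq0]; linarith
  have hp0 : (0 : ℝ) ≤ ((q : ℝ) - 1) / q := by positivity
  have hmono : (((q : ℝ) - 1) / q) ^ t ≤ (((q : ℝ) - 1) / q) ^ S.card :=
    pow_le_pow_of_le_one hp0 hp1 hS
  nlinarith [pow_pos hq0 R, pow_nonneg hp0 t]

lemma count_le_aux {q R t : ℕ} (hq : 2 ≤ q) :
    ∀ (s : ℕ) (S : Fin s → Finset (Fin R))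
      (_ : ∀ i j : Fin s, i ≠ j → Disjoint (S i) (S j))
      (_ : ∀ i, (S i).card ≤ t) (c : Fin s → Fin R → Fin q),
    ((Finset.univ.filter fun b : Fin R → Fin q => ∀ i, ∃ r ∈ S i, b r = c i r).card : ℝ)
      ≤ (1 - (((q : ℝ) - 1) / q) ^ t) ^ s * (q : ℝ) ^ R := by
  classical
  intro s
  induction s with
  | zero =>
    intro S _ _ c
    simp only [pow_zero, one_mul]
    have : ((Finset.univ.filter fun b : Fin R → Fin q => ∀ i : Fin 0, ∃ r ∈ S i, b r = c i r).card : ℝ)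
        ≤ ((Finset.univ : Finset (Fin R → Fin q)).card : ℝ) := by
      exact_mod_cast Finset.card_le_card (Finset.filter_subset _ _)
    calc _ ≤ ((Finset.univ : Finset (Fin R → Fin q)).card : ℝ) := this
      _ = (q : ℝ) ^ R := by
          rw [Finset.card_univ, Fintype.card_fun, Fintype.card_fin, Fintype.card_fin]; push_cast; ring
  | succ n ih =>
    intro S hdisj hsize c
    set p : ℝ := (((q : ℝ) - 1) / q) ^ t with hp
    have hq0 : (0 : ℝ) < q := by positivity
    have hqR : (0 : ℝ) < (q : ℝ) ^ R := by positivity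
    have hp1 : (((q : ℝ) - 1) / q) ≤ 1 := by
      rw [div_le_one hq0]; linarith
    have hq2 : (2 : ℝ) ≤ (q : ℝ) := by exact_mod_cast hq
    have hp0 : (0 : ℝ) ≤ ((q : ℝ) - 1) / q := div_nonneg (by linarith) hq0.le
    have hpub : p ≤ 1 := pow_le_one₀ hp0 hp1
    -- split the condition
    have hsetEq : (Finset.univ.filter fun b : Fin R → Fin q =>
          ∀ i : Fin (n + 1), ∃ r ∈ S i, b r = c i r)
        = (Finset.univ.filter fun b : Fin R → Fin q =>
            (∃ r ∈ S 0, b r = c 0 r) ∧ ∀ i : Fin n, ∃ r ∈ S i.succ, b r = c i.succ r) := by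
      apply Finset.filter_congr
      intro b _
      exact Fin.forall_fin_succ
    rw [hsetEq]
    have hindep := indep_count (q := q) (R := R) (S 0)
      (fun b => ∃ r ∈ S 0, b r = c 0 r)
      (fun b => ∀ i : Fin n, ∃ r ∈ S i.succ, b r = c i.succ r)
      (by
        rintro b b' hbb' ⟨r, hr, hbr⟩
        exact ⟨r, hr, (hbb' r hr) ▸ hbr⟩)
      (by
        intro b b' hbb' h i
        obtain ⟨r, hr, hbr⟩ := h i
        have hrnot : r ∉ S 0 := by
          intro hmem
          exact (Finset.disjoint_left.mp (hdisj i.succ 0 (Fin.succ_ne_zero i)) hr) hmem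
        exact ⟨r, hr, (hbb' r hrnot) ▸ hbr⟩)
    have hP := block_count_le hq (S 0) (hsize 0) (c 0)
    have hQ := ih (fun i => S i.succ)
      (fun i j hij => hdisj i.succ j.succ (fun h => hij (Fin.succ_injective _ h)))
      (fun i => hsize i.succ) (fun i => c i.succ)
    have hcast : ((Finset.univ.filter fun b : Fin R → Fin q =>
          (∃ r ∈ S 0, b r = c 0 r) ∧ ∀ i : Fin n, ∃ r ∈ S i.succ, b r = c i.succ r).card : ℝ)
          * (q : ℝ) ^ R
        = ((Finset.univ.filter fun b : Fin R → Fin q => ∃ r ∈ S 0, b r = c 0 r).card : ℝ)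
          * ((Finset.univ.filter fun b : Fin R → Fin q =>
              ∀ i : Fin n, ∃ r ∈ S i.succ, b r = c i.succ r).card : ℝ) := by
      exact_mod_cast congrArg (Nat.cast : ℕ → ℝ) hindep
    rw [← mul_le_mul_iff_of_pos_right hqR, hcast]
    calc _ ≤ ((1 - p) * (q : ℝ) ^ R) * ((1 - p) ^ n * (q : ℝ) ^ R) := by
          apply mul_le_mul hP hQ (Nat.cast_nonneg _) ?_
          nlinarith
      _ = (1 - p) ^ (n + 1) * (q : ℝ) ^ R * (q : ℝ) ^ R := by ring

/-- **Claim 5.3.** Let `S₁,…,S_s` be pairwise disjoint subsets of `[R]`, each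
of size at most `t`, and `c₁,…,c_s` arbitrary strings. If `I ⊆ [q]^R` has
`|I| ≥ δ·q^R` and every `b ∈ I` agrees with `c_i` somewhere on `S_i` for each
`i`, then `s ≤ (q/(q−1))^t · ln(1/δ)`. -/
theorem disjointBlocks_few (q t R s : ℕ) (hq : 2 ≤ q) (ht : 1 ≤ t)
    (hR : 1 ≤ R) (δ : ℝ) (hδ0 : 0 < δ) (hδ1 : δ ≤ 1)
    (S : Fin s → Finset (Fin R))
    (hdisj : ∀ i j : Fin s, i ≠ j → Disjoint (S i) (S j))
    (hsize : ∀ i, (S i).card ≤ t)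
    (c : Fin s → Fin R → Fin q)
    (I : Finset (Fin R → Fin q))
    (hIcard : δ * (q : ℝ) ^ R ≤ (I.card : ℝ))
    (hI : ∀ b ∈ I, ∀ i : Fin s, ∃ r ∈ S i, b r = c i r) :
    (s : ℝ) ≤ ((q : ℝ) / ((q : ℝ) - 1)) ^ t * Real.log (1 / δ) := by
  classical
  set p : ℝ := (((q : ℝ) - 1) / q) ^ t with hpdef
  have hq2 : (2 : ℝ) ≤ (q : ℝ) := by exact_mod_cast hq
  have hq0 : (0 : ℝ) < q := by linarith
  have hqR : (0 : ℝ) < (q : ℝ) ^ R := by positivity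
  have hp0 : 0 < p := pow_pos (div_pos (by linarith) hq0) t
  have hplt : p < 1 := by
    have hb : ((q : ℝ) - 1) / q < 1 := by
      rw [div_lt_one hq0]; linarith
    have hb0 : (0 : ℝ) ≤ ((q : ℝ) - 1) / q := div_nonneg (by linarith) hq0.le
    exact pow_lt_one₀ hb0 hb (by omega)
  -- I is contained in the constrained set
  have hIsub : I ⊆ Finset.univ.filter
      (fun b : Fin R → Fin q => ∀ i : Fin s, ∃ r ∈ S i, b r = c i r) :=
    fun b hb => Finset.mem_filter.mpr ⟨Finset.mem_univ _, hI b hb⟩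
  have hcount := count_le_aux (R := R) (t := t) hq s S hdisj hsize c
  have h1 : δ * (q : ℝ) ^ R ≤ (1 - p) ^ s * (q : ℝ) ^ R := by
    refine le_trans hIcard (le_trans ?_ hcount)
    exact_mod_cast Finset.card_le_card hIsub
  have hδle : δ ≤ (1 - p) ^ s := le_of_mul_le_mul_right h1 hqR
  have hlog : Real.log δ ≤ (s : ℝ) * Real.log (1 - p) := by
    calc Real.log δ ≤ Real.log ((1 - p) ^ s) := Real.log_le_log hδ0 hδle
      _ = (s : ℝ) * Real.log (1 - p) := by rw [Real.log_pow]
  have hlog2 : Real.log (1 - p) ≤ -p := by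
    have := Real.log_le_sub_one_of_pos (by linarith : (0 : ℝ) < 1 - p)
    linarith
  have hsp : (s : ℝ) * p ≤ Real.log (1 / δ) := by
    rw [one_div, Real.log_inv]
    have hs0 : (0 : ℝ) ≤ (s : ℝ) := Nat.cast_nonneg s
    nlinarith
  have hpinv : ((q : ℝ) / ((q : ℝ) - 1)) ^ t = p⁻¹ := by
    rw [hpdef, ← inv_pow, inv_div]
  rw [hpinv, inv_mul_eq_div, le_div_iff₀ hp0]
  exact hsp
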